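/- Let (X, d) be a continuum, μ a Whitney map on C(X), t ∈ (0, μ(X)), and let H ⊆ X be an open set such that X \ H is connected and μ(X \ H) > t. Then the set 𝓗 = {C ∈ μ⁻¹(t) : C ⊆ X \ H} is a nonempty subcontinuum of μ⁻¹(t). -/

import Mathlib

open TopologicalSpace Metric Set Filter Topology

set_option linter.unusedSectionVars false
set_option linter.unusedVariables false
set_option maxHeartbeats 1000000


open TopologicalSpace

/-- The hyperspace of nonempty subcontinua of `X`, with the Hausdorff metric
inherited from `NonemptyCompacts X`. -/
abbrev SubC (X : Type*) [MetricSpace X] :=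
  {K : NonemptyCompacts X // IsConnected (K : Set X)}

/-- A Whitney map on `C(X)`: continuous, zero on singletons, and strictly
monotone with respect to proper inclusion. -/
def IsWhitneyMap {X : Type*} [MetricSpace X] (μ : SubC X → ℝ) : Prop :=
  Continuous μ ∧ (∀ (x : X) (K : SubC X), (K.1 : Set X) = {x} → μ K = 0) ∧
    ∀ A B : SubC X, (A.1 : Set X) ⊂ (B.1 : Set X) → μ A < μ B

/-- The whole continuum `X` as an element of its hyperspace of subcontinua. -/
def wholeC (X : Type*) [MetricSpace X] [CompactSpace X] [ConnectedSpace X] [Nonempty X] :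
    SubC X :=
  ⟨⟨⟨Set.univ, isCompact_univ⟩, Set.univ_nonempty⟩, isConnected_univ⟩


namespace WhitAux
variable {X : Type*} [MetricSpace X] [CompactSpace X]

def car (C : SubC X) : Set X := (C.1 : Set X)
lemma car_nonempty (C : SubC X) : (car C).Nonempty := C.1.2
lemma car_isCompact (C : SubC X) : IsCompact (car C) := C.1.1.2
lemma car_isConnected (C : SubC X) : IsConnected (car C) := C.2
lemma car_isClosed (C : SubC X) : IsClosed (car C) := (car_isCompact C).isClosed
lemma car_isPreconnected (C : SubC X) : IsPreconnected (car C) := C.2.2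
lemma subC_eq {A B : SubC X} (h : car A = car B) : A = B :=
  Subtype.ext (NonemptyCompacts.ext h)
def mk' (A : Set X) (hc : IsCompact A) (hconn : IsConnected A) : SubC X :=
  ⟨⟨⟨A, hc⟩, hconn.nonempty⟩, hconn⟩
@[simp] lemma car_mk' (A : Set X) (hc : IsCompact A) (hconn : IsConnected A) :
    car (mk' A hc hconn) = A := rfl
lemma dist_eq_hd (A B : SubC X) : dist A B = hausdorffDist (car A) (car B) := by
  rw [Subtype.dist_eq, NonemptyCompacts.dist_eq]; rfl
lemma hed_ne_top (A B : SubC X) : EMetric.hausdorffEdist (car A) (car B) ≠ ⊤ :=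
  Metric.hausdorffEdist_ne_top_of_nonempty_of_bounded (car_nonempty A) (car_nonempty B)
    (car_isCompact A).isBounded (car_isCompact B).isBounded

lemma infDist_le_dist_subC {x : X} {C D : SubC X} (hx : x ∈ car C) :
    infDist x (car D) ≤ dist C D := by
  rw [dist_eq_hd]
  exact infDist_le_hausdorffDist_of_mem hx (hed_ne_top C D)

lemma subset_lim {F : Set X} (hF : IsClosed F) {C : ℕ → SubC X} {C₀ : SubC X}
    (h : Tendsto C atTop (𝓝 C₀)) (hsub : ∀ n, car (C n) ⊆ F) : car C₀ ⊆ F := by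
  intro x hx
  have hFne : F.Nonempty := (car_nonempty (C 0)).mono (hsub 0) |>.imp fun _ h => h
  have hd : Tendsto (fun n => dist (C n) C₀) atTop (𝓝 0) :=
    tendsto_iff_dist_tendsto_zero.mp h
  have hb : ∀ n, infDist x F ≤ dist (C n) C₀ := by
    intro n
    calc infDist x F ≤ infDist x (car (C n)) :=
          infDist_le_infDist_of_subset (hsub n) (car_nonempty _)
      _ ≤ hausdorffDist (car C₀) (car (C n)) := infDist_le_hausdorffDist_of_mem hx (hed_ne_top _ _)
      _ = dist (C n) C₀ := by rw [dist_eq_hd, hausdorffDist_comm]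
  have : infDist x F ≤ 0 := ge_of_tendsto hd (Eventually.of_forall hb)
  exact (hF.mem_iff_infDist_zero hFne).mpr (le_antisymm this infDist_nonneg)

lemma mem_lim {C : ℕ → SubC X} {C₀ : SubC X} (h : Tendsto C atTop (𝓝 C₀))
    {x : ℕ → X} {x₀ : X} (hx : Tendsto x atTop (𝓝 x₀)) (hm : ∀ n, x n ∈ car (C n)) :
    x₀ ∈ car C₀ := by
  have hd : Tendsto (fun n => dist (C n) C₀ + dist x₀ (x n)) atTop (𝓝 0) := by
    have h1 := tendsto_iff_dist_tendsto_zero.mp h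
    have h2 := tendsto_iff_dist_tendsto_zero.mp hx
    have h2' : Tendsto (fun n => dist x₀ (x n)) atTop (𝓝 0) := by
      simpa [dist_comm] using h2
    simpa using h1.add h2'
  have hb : ∀ n, infDist x₀ (car C₀) ≤ dist (C n) C₀ + dist x₀ (x n) := by
    intro n
    calc infDist x₀ (car C₀) ≤ infDist (x n) (car C₀) + dist x₀ (x n) :=
          infDist_le_infDist_add_dist
      _ ≤ hausdorffDist (car (C n)) (car C₀) + dist x₀ (x n) := by
          gcongr
          exact infDist_le_hausdorffDist_of_mem (hm n) (hed_ne_top _ _)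
      _ = dist (C n) C₀ + dist x₀ (x n) := by rw [dist_eq_hd]
  have : infDist x₀ (car C₀) ≤ 0 := ge_of_tendsto hd (Eventually.of_forall hb)
  exact ((car_isClosed C₀).mem_iff_infDist_zero (car_nonempty C₀)).mpr
    (le_antisymm this infDist_nonneg)

lemma isClosed_carSubset {F : Set X} (hF : IsClosed F) :
    IsClosed {C : SubC X | car C ⊆ F} := by
  refine IsSeqClosed.isClosed ?_
  intro C C₀ hmem hC
  exact subset_lim hF hC hmem

lemma isClosed_pairSubset :
    IsClosed {p : SubC X × SubC X | car p.1 ⊆ car p.2} := by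
  refine IsSeqClosed.isClosed ?_
  intro p p₀ hmem hp
  have h1 : Tendsto (fun n => (p n).1) atTop (𝓝 p₀.1) :=
    (continuous_fst.tendsto p₀).comp hp
  have h2 : Tendsto (fun n => (p n).2) atTop (𝓝 p₀.2) :=
    (continuous_snd.tendsto p₀).comp hp
  intro x hx
  have hd : Tendsto (fun n => dist p₀.1 ((p n).1) + dist ((p n).2) p₀.2) atTop (𝓝 0) := by
    have k1 := tendsto_iff_dist_tendsto_zero.mp h1
    have k2 := tendsto_iff_dist_tendsto_zero.mp h2
    have k1' : Tendsto (fun n => dist p₀.1 ((p n).1)) atTop (𝓝 0) := by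
      simpa [dist_comm] using k1
    simpa using k1'.add k2
  have hb : ∀ n, infDist x (car p₀.2) ≤ dist p₀.1 ((p n).1) + dist ((p n).2) p₀.2 := by
    intro n
    calc infDist x (car p₀.2)
        ≤ infDist x (car ((p n).2)) + hausdorffDist (car ((p n).2)) (car p₀.2) :=
          infDist_le_infDist_add_hausdorffDist (hed_ne_top _ _)
      _ ≤ infDist x (car ((p n).1)) + hausdorffDist (car ((p n).2)) (car p₀.2) := by
          gcongr
          exact infDist_le_infDist_of_subset (hmem n) (car_nonempty _)
      _ ≤ hausdorffDist (car p₀.1) (car ((p n).1)) + hausdorffDist (car ((p n).2)) (car p₀.2) := by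
          gcongr
          exact infDist_le_hausdorffDist_of_mem hx (hed_ne_top _ _)
      _ = dist p₀.1 ((p n).1) + dist ((p n).2) p₀.2 := by rw [dist_eq_hd, dist_eq_hd]
  have : infDist x (car p₀.2) ≤ 0 := ge_of_tendsto hd (Eventually.of_forall hb)
  exact ((car_isClosed p₀.2).mem_iff_infDist_zero (car_nonempty p₀.2)).mpr
    (le_antisymm this infDist_nonneg)

lemma gap {α : Type*} [MetricSpace α] {A B : Set α} (hA : IsCompact A) (hB : IsCompact B)
    (hAne : A.Nonempty) (hBne : B.Nonempty) (hdisj : A ∩ B = ∅) :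
    ∃ Δ > 0, ∀ a ∈ A, ∀ b ∈ B, Δ ≤ dist a b := by
  obtain ⟨a₀, ha₀, hmin⟩ := hA.exists_isMinOn hAne (continuous_infDist_pt B).continuousOn
  refine ⟨infDist a₀ B, ?_, ?_⟩
  · refine (hB.isClosed.notMem_iff_infDist_pos hBne).mp ?_
    intro hmem
    have : a₀ ∈ A ∩ B := ⟨ha₀, hmem⟩
    rw [hdisj] at this
    exact absurd this (notMem_empty a₀)
  · intro a ha b hb
    calc infDist a₀ B ≤ infDist a B := hmin ha
      _ ≤ dist a b := infDist_le_dist_of_mem hb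

lemma split {α : Type*} [MetricSpace α] {s : Set α} (hs : IsCompact s)
    (h : ¬ IsPreconnected s) :
    ∃ A B : Set α, A.Nonempty ∧ B.Nonempty ∧ s = A ∪ B ∧
      ∃ Δ > 0, ∀ a ∈ A, ∀ b ∈ B, Δ ≤ dist a b := by
  rw [IsPreconnected] at h
  push_neg at h
  obtain ⟨u, v, hu, hv, hcov, hneu, hnev, hne⟩ := h
  refine ⟨s ∩ vᶜ, s ∩ uᶜ, ?_, ?_, ?_, ?_⟩
  · obtain ⟨x, hxs, hxu⟩ := hneu
    exact ⟨x, hxs, fun hxv => absurd (by exact ⟨hxs, hxu, hxv⟩ : x ∈ s ∩ (u ∩ v)) (by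
      rw [hne]; exact notMem_empty x)⟩
  · obtain ⟨x, hxs, hxv⟩ := hnev
    exact ⟨x, hxs, fun hxu => absurd (by exact ⟨hxs, hxu, hxv⟩ : x ∈ s ∩ (u ∩ v)) (by
      rw [hne]; exact notMem_empty x)⟩
  · ext x
    constructor
    · intro hxs
      rcases hcov hxs with hxu | hxv
      · exact Or.inl ⟨hxs, fun hxv => absurd (by exact ⟨hxs, hxu, hxv⟩ : x ∈ s ∩ (u ∩ v)) (by
          rw [hne]; exact notMem_empty x)⟩
      · exact Or.inr ⟨hxs, fun hxu => absurd (by exact ⟨hxs, hxu, hxv⟩ : x ∈ s ∩ (u ∩ v)) (by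
          rw [hne]; exact notMem_empty x)⟩
    · rintro (⟨hxs, _⟩ | ⟨hxs, _⟩) <;> exact hxs
  · apply gap (hs.inter_right hv.isClosed_compl) (hs.inter_right hu.isClosed_compl)
    · obtain ⟨x, hxs, hxu⟩ := hneu
      exact ⟨x, hxs, fun hxv => absurd (by exact ⟨hxs, hxu, hxv⟩ : x ∈ s ∩ (u ∩ v)) (by
        rw [hne]; exact notMem_empty x)⟩
    · obtain ⟨x, hxs, hxv⟩ := hnev
      exact ⟨x, hxs, fun hxu => absurd (by exact ⟨hxs, hxu, hxv⟩ : x ∈ s ∩ (u ∩ v)) (by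
        rw [hne]; exact notMem_empty x)⟩
    · ext x
      simp only [mem_inter_iff, mem_compl_iff, mem_empty_iff_false, iff_false]
      rintro ⟨⟨hxs, hxv⟩, ⟨_, hxu⟩⟩
      rcases hcov hxs with hxu' | hxv'
      · exact hxu hxu'
      · exact hxv hxv'

lemma isClosed_connected_nec :
    IsClosed {N : NonemptyCompacts X | IsConnected (N : Set X)} := by
  refine IsSeqClosed.isClosed ?_
  intro N N₀ hmem hN
  refine ⟨N₀.2, ?_⟩
  by_contra hpc
  obtain ⟨A, B, hAne, hBne, hunion, Δ, hΔ, hgap⟩ :=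
    split (α := X) (s := (N₀ : Set X)) N₀.1.2 hpc
  have hr : (0:ℝ) < Δ/3 := by linarith
  obtain ⟨n, hn⟩ : ∃ n, dist (N n) N₀ < Δ/3 := by
    have := tendsto_iff_dist_tendsto_zero.mp hN
    rcases (Metric.tendsto_atTop.mp (by simpa using this) (Δ/3) hr) with ⟨n, hn⟩
    exact ⟨n, by simpa [Real.dist_eq, abs_of_nonneg dist_nonneg] using hn n le_rfl⟩
  rw [NonemptyCompacts.dist_eq] at hn
  have hfin : EMetric.hausdorffEdist ((N n : Set X)) ((N₀ : Set X)) ≠ ⊤ :=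
    Metric.hausdorffEdist_ne_top_of_nonempty_of_bounded (N n).2 N₀.2
      (N n).1.2.isBounded N₀.1.2.isBounded
  have hcov : (N n : Set X) ⊆ thickening (Δ/3) A ∪ thickening (Δ/3) B := by
    intro x hx
    obtain ⟨y, hy, hxy⟩ := exists_dist_lt_of_hausdorffDist_lt hx hn hfin
    rw [hunion] at hy
    rcases hy with hy | hy
    · exact Or.inl (Metric.mem_thickening_iff.mpr ⟨y, hy, hxy⟩)
    · exact Or.inr (Metric.mem_thickening_iff.mpr ⟨y, hy, hxy⟩)
  have hneA : ((N n : Set X) ∩ thickening (Δ/3) A).Nonempty := by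
    obtain ⟨a, ha⟩ := hAne
    have ha' : a ∈ (N₀ : Set X) := by rw [hunion]; exact Or.inl ha
    obtain ⟨x, hx, hax⟩ := exists_dist_lt_of_hausdorffDist_lt' ha' hn hfin
    exact ⟨x, hx, Metric.mem_thickening_iff.mpr ⟨a, ha, by simpa [dist_comm] using hax⟩⟩
  have hneB : ((N n : Set X) ∩ thickening (Δ/3) B).Nonempty := by
    obtain ⟨b, hb⟩ := hBne
    have hb' : b ∈ (N₀ : Set X) := by rw [hunion]; exact Or.inr hb
    obtain ⟨x, hx, hbx⟩ := exists_dist_lt_of_hausdorffDist_lt' hb' hn hfin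
    exact ⟨x, hx, Metric.mem_thickening_iff.mpr ⟨b, hb, by simpa [dist_comm] using hbx⟩⟩
  obtain ⟨z, _, hzA, hzB⟩ :=
    (hmem n).2 (thickening (Δ/3) A) (thickening (Δ/3) B)
      isOpen_thickening isOpen_thickening hcov hneA hneB
  obtain ⟨a, ha, hza⟩ := Metric.mem_thickening_iff.mp hzA
  obtain ⟨b, hb, hzb⟩ := Metric.mem_thickening_iff.mp hzB
  have : dist a b < Δ := by
    calc dist a b ≤ dist a z + dist z b := dist_triangle _ _ _
      _ < Δ/3 + Δ/3 := by rw [dist_comm a z]; exact add_lt_add hza hzb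
      _ ≤ Δ := by linarith
  exact absurd (hgap a ha b hb) (not_le.mpr this)

instance : CompactSpace (SubC X) :=
  isCompact_iff_compactSpace.mp (isClosed_connected_nec.isCompact)

/-- Boundary bumping: the connected component of `C₀` in the closed
`δ`-neighborhood of `C₀` inside `D` is strictly bigger than `C₀`,
provided this neighborhood is not all of `D`. -/
lemma exists_bump {C₀ D : SubC X} (hsub : car C₀ ⊆ car D) {δ : ℝ} (hδ : 0 < δ)
    (hnc : ¬ (car D ⊆ {y | infDist y (car C₀) ≤ δ})) :
    ∃ E : SubC X, car C₀ ⊆ car E ∧ car E ⊆ car D ∩ {y | infDist y (car C₀) ≤ δ} ∧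
      car C₀ ≠ car E := by
  obtain ⟨x₀, hx₀⟩ := car_nonempty C₀
  set V : Set X := car D ∩ {y | infDist y (car C₀) ≤ δ} with hVdef
  have hVclosed : IsClosed V :=
    (car_isClosed D).inter (isClosed_le (continuous_infDist_pt _) continuous_const)
  have hVcomp : IsCompact V := hVclosed.isCompact
  have hC₀V : car C₀ ⊆ V := fun y hy => ⟨hsub hy, by
    simp only [mem_setOf_eq, infDist_zero_of_mem hy]; exact hδ.le⟩
  have hx₀V : x₀ ∈ V := hC₀V hx₀
  set E₀ := connectedComponentIn V x₀ with hE₀def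
  have hC₀E : car C₀ ⊆ E₀ := (car_isPreconnected C₀).subset_connectedComponentIn hx₀ hC₀V
  have hE₀V : E₀ ⊆ V := connectedComponentIn_subset _ _
  have hE₀conn : IsPreconnected E₀ := isPreconnected_connectedComponentIn
  have hx₀E : x₀ ∈ E₀ := mem_connectedComponentIn hx₀V
  have hE₀closed : IsClosed E₀ := by
    have h1 : closure E₀ ⊆ V := hVclosed.closure_subset_iff.mpr hE₀V
    have h2 : closure E₀ ⊆ E₀ :=
      hE₀conn.closure.subset_connectedComponentIn (subset_closure hx₀E) h1
    exact isClosed_of_closure_subset h2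
  have hE₀comp : IsCompact E₀ := hE₀closed.isCompact
  -- main claim: some point of E₀ has infDist exactly δ from C₀
  have main : ∃ w ∈ E₀, infDist w (car C₀) = δ := by
    by_contra hW
    push_neg at hW
    haveI : CompactSpace V := isCompact_iff_compactSpace.mp hVcomp
    set x' : V := ⟨x₀, hx₀V⟩ with hx'def
    set Wv : Set V := {y : V | infDist (y : X) (car C₀) = δ} with hWvdef
    have hWvclosed : IsClosed Wv :=
      isClosed_eq ((continuous_infDist_pt _).comp continuous_subtype_val) continuous_const
    -- find clopen U containing x' and disjoint from Wv
    have hclopen : ∃ U : Set V, IsClopen U ∧ x' ∈ U ∧ U ∩ Wv = ∅ := by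
      by_contra hcl
      push_neg at hcl
      haveI : Nonempty {Z : Set V // IsClopen Z ∧ x' ∈ Z} :=
        ⟨⟨Set.univ, isClopen_univ, mem_univ _⟩⟩
      have hinter :
          (⋂ Z : {Z : Set V // IsClopen Z ∧ x' ∈ Z}, (Z : Set V) ∩ Wv).Nonempty := by
        apply IsCompact.nonempty_iInter_of_directed_nonempty_isCompact_isClosed
        · rintro ⟨Z₁, hZ₁, hx₁⟩ ⟨Z₂, hZ₂, hx₂⟩
          exact ⟨⟨Z₁ ∩ Z₂, hZ₁.inter hZ₂, ⟨hx₁, hx₂⟩⟩,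
            inter_subset_inter_left _ inter_subset_left,
            inter_subset_inter_left _ inter_subset_right⟩
        · rintro ⟨Z, hZ, hx⟩
          exact hcl Z hZ hx
        · rintro ⟨Z, hZ, hx⟩
          exact (hZ.isClosed.inter hWvclosed).isCompact
        · rintro ⟨Z, hZ, hx⟩
          exact hZ.isClosed.inter hWvclosed
      obtain ⟨y, hy⟩ := hinter
      have hy1 : y ∈ connectedComponent x' := by
        rw [connectedComponent_eq_iInter_isClopen]
        exact mem_iInter.mpr fun Z => (mem_iInter.mp hy Z).1
      have hy2 : y ∈ Wv := (mem_iInter.mp hy ⟨Set.univ, isClopen_univ, mem_univ _⟩).2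
      have : (y : X) ∈ E₀ := by
        rw [hE₀def, connectedComponentIn_eq_image hx₀V]
        exact ⟨y, hy1, rfl⟩
      exact hW _ this hy2
    obtain ⟨U, hUclopen, hx'U, hUWv⟩ := hclopen
    obtain ⟨O, hOopen, hOU⟩ := isOpen_induced_iff.mp hUclopen.2
    set U' : Set X := Subtype.val '' U with hU'def
    have hU'V : U' ⊆ V := by rintro _ ⟨y, _, rfl⟩; exact y.2
    have hU'closed : IsClosed U' := by
      have : IsCompact U := hUclopen.1.isCompact
      exact (this.image continuous_subtype_val).isClosed
    -- use preconnectedness of D with two open sets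
    have hpc := car_isPreconnected D
    have hcov : car D ⊆ (O ∩ {y | infDist y (car C₀) < δ}) ∪ U'ᶜ := by
      intro y hy
      by_cases hyU : y ∈ U'
      · obtain ⟨yv, hyvU, hyveq⟩ := hyU
        refine Or.inl ⟨?_, ?_⟩
        · have : yv ∈ Subtype.val ⁻¹' O := by rw [hOU]; exact hyvU
          simpa [hyveq] using this
        · have h1 : infDist y (car C₀) ≤ δ := (hU'V ⟨yv, hyvU, hyveq⟩).2
          rcases lt_or_eq_of_le h1 with h | h
          · exact h
          · exfalso
            have : yv ∈ Wv := by
              simp only [hWvdef, mem_setOf_eq, hyveq]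
              exact h
            have hmem : yv ∈ U ∩ Wv := ⟨hyvU, this⟩
            rw [hUWv] at hmem
            exact hmem
      · exact Or.inr hyU
    have hne1 : (car D ∩ (O ∩ {y | infDist y (car C₀) < δ})).Nonempty := by
      refine ⟨x₀, hsub hx₀, ?_, ?_⟩
      · have : x' ∈ Subtype.val ⁻¹' O := by rw [hOU]; exact hx'U
        simpa using this
      · simp only [mem_setOf_eq, infDist_zero_of_mem hx₀]
        exact hδ
    have hne2 : (car D ∩ U'ᶜ).Nonempty := by
      obtain ⟨p, hpD, hp⟩ := not_subset.mp hnc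
      exact ⟨p, hpD, fun hpU => hp (hU'V hpU).2⟩
    obtain ⟨z, hzD, ⟨hzO, hzlt⟩, hzU⟩ :=
      hpc _ _ (hOopen.inter (isOpen_lt (continuous_infDist_pt _) continuous_const))
        hU'closed.isOpen_compl hcov hne1 hne2
    have hzV : z ∈ V := ⟨hzD, by simpa using hzlt.le⟩
    have : (⟨z, hzV⟩ : V) ∈ U := by rw [← hOU]; simpa using hzO
    exact hzU ⟨⟨z, hzV⟩, this, rfl⟩
  obtain ⟨w, hwE, hwδ⟩ := main
  refine ⟨mk' E₀ hE₀comp ⟨⟨x₀, hx₀E⟩, hE₀conn⟩, by exact hC₀E,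
    by exact hE₀V, ?_⟩
  intro heq
  have hwC₀ : w ∈ car C₀ := by rw [heq]; exact hwE
  rw [infDist_zero_of_mem hwC₀] at hwδ
  exact absurd hwδ.symm (ne_of_gt hδ)

/-- A chain of sets comes Hausdorff-close to the closure of its union. -/
lemma chain_approx {c : Set (Set X)} (hch : IsChain (· ⊆ ·) c) (hcne : c.Nonempty)
    {η : ℝ} (hη : 0 < η) :
    ∃ A ∈ c, hausdorffDist A (closure (⋃₀ c)) ≤ η := by
  by_cases hne : (⋃₀ c).Nonempty
  · haveI : Nonempty (⋃₀ c : Set X) := hne.to_subtype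
    set T := closure (⋃₀ c) with hTdef
    have hTcomp : IsCompact T := isClosed_closure.isCompact
    have hcov : T ⊆ ⋃ y : (⋃₀ c : Set X), ball (y : X) η := by
      intro x hx
      rcases Metric.mem_closure_iff.mp hx η hη with ⟨y, hy, hxy⟩
      exact mem_iUnion.mpr ⟨⟨y, hy⟩, by simpa using hxy⟩
    obtain ⟨Fs, hFs⟩ := hTcomp.elim_finite_subcover _ (fun _ => isOpen_ball) hcov
    -- choice of a set in c for each index
    have hsel : ∀ y : (⋃₀ c : Set X), ∃ A, A ∈ c ∧ (y : X) ∈ A := by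
      rintro ⟨y, hy⟩
      simpa using hy
    choose g hgc hgy using hsel
    haveI : IsTrans (Set X) (· ⊆ ·) := ⟨fun _ _ _ h₁ h₂ => h₁.trans h₂⟩
    have hdir : Directed (· ⊆ ·) g := by
      intro y₁ y₂
      rcases eq_or_ne (g y₁) (g y₂) with h | h
      · exact ⟨y₂, h.le, subset_rfl⟩
      · rcases hch (hgc y₁) (hgc y₂) h with h' | h'
        · exact ⟨y₂, h', subset_rfl⟩
        · exact ⟨y₁, subset_rfl, h'⟩
    obtain ⟨z, hz⟩ := hdir.finset_le Fs
    refine ⟨g z, hgc z, ?_⟩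
    apply hausdorffDist_le_of_infDist hη.le
    · intro x hx
      have : x ∈ T := subset_closure (subset_sUnion_of_mem (hgc z) hx)
      rw [infDist_zero_of_mem this]
      exact hη.le
    · intro x hx
      rcases mem_iUnion₂.mp (hFs hx) with ⟨y, hyF, hxy⟩
      have hyz : (y : X) ∈ g z := hz y hyF (hgy y)
      exact le_trans (infDist_le_dist_of_mem hyz) (le_of_lt (mem_ball.mp hxy))
  · obtain ⟨A, hA⟩ := hcne
    have hAe : A = ∅ := by
      rw [Set.not_nonempty_iff_eq_empty] at hne
      exact eq_empty_of_subset_empty (hne ▸ subset_sUnion_of_mem hA)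
    refine ⟨A, hA, ?_⟩
    rw [Set.not_nonempty_iff_eq_empty] at hne
    rw [hne]
    simp [hAe, hη.le]

/-- Intermediate-value property for Whitney maps along nested continua. -/
lemma exists_mu_between {μ : SubC X → ℝ} (hcont : Continuous μ)
    {F D : SubC X} (hFD : car F ⊆ car D) {s : ℝ} (h1 : μ F ≤ s) (h2 : s ≤ μ D) :
    ∃ C : SubC X, car F ⊆ car C ∧ car C ⊆ car D ∧ μ C = s := by
  classical
  set S : Set (Set X) :=
    {A | ∃ C : SubC X, car C = A ∧ car F ⊆ A ∧ A ⊆ car D ∧ μ C ≤ s} with hSdef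
  have hFS : car F ∈ S := ⟨F, rfl, subset_rfl, hFD, h1⟩
  have hub : ∀ c ⊆ S, IsChain (· ⊆ ·) c → c.Nonempty → ∃ ub ∈ S, ∀ A ∈ c, A ⊆ ub := by
    intro c hcS hch hcne
    obtain ⟨A₀, hA₀⟩ := hcne
    obtain ⟨CA₀, hCA₀, hFA₀, _, _⟩ := hcS hA₀
    set T := closure (⋃₀ c) with hTdef
    have hTcomp : IsCompact T := isClosed_closure.isCompact
    have hTne : T.Nonempty := by
      obtain ⟨x, hx⟩ := car_nonempty F
      exact ⟨x, subset_closure (subset_sUnion_of_mem hA₀ (hFA₀ hx))⟩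
    have hTconn : IsConnected T := by
      refine ⟨hTne, IsPreconnected.closure ?_⟩
      apply IsPreconnected.sUnion_directed hch.directedOn
      intro A hA
      obtain ⟨CA, hCAeq, _, _, _⟩ := hcS hA
      exact hCAeq ▸ car_isPreconnected CA
    set CT : SubC X := mk' T hTcomp hTconn with hCTdef
    have hμT : μ CT ≤ s := by
      refine le_of_forall_pos_le_add ?_
      intro ε hε
      obtain ⟨δ, hδ, hcontd⟩ := Metric.continuous_iff.mp hcont CT ε hε
      obtain ⟨A, hAc, hAT⟩ := chain_approx hch ⟨A₀, hA₀⟩ (half_pos hδ)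
      obtain ⟨CA, hCAeq, _, _, hμA⟩ := hcS hAc
      have hdist : dist CA CT < δ := by
        rw [dist_eq_hd, hCAeq]
        calc hausdorffDist A (car CT) = hausdorffDist A T := by rw [hCTdef]; rfl
          _ ≤ δ/2 := hAT
          _ < δ := by linarith
      have := hcontd CA hdist
      have h3 : |μ CA - μ CT| < ε := by rwa [Real.dist_eq] at this
      obtain ⟨h5, h6⟩ := abs_lt.mp h3
      have h4 : μ CT < μ CA + ε := by linarith
      linarith
    refine ⟨T, ⟨CT, rfl, ?_, ?_, hμT⟩, fun A hA => (subset_sUnion_of_mem hA).trans subset_closure⟩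
    · exact fun x hx => subset_closure (subset_sUnion_of_mem hA₀ (hFA₀ hx))
    · apply (car_isClosed D).closure_subset_iff.mpr
      exact sUnion_subset fun A hA => (hcS hA).choose_spec.2.2.1
  obtain ⟨m, hFm, hmmax⟩ := zorn_subset_nonempty S hub (car F) hFS
  obtain ⟨Cm, hCmeq, hFCm, hCmD, hμCm⟩ := hmmax.1
  rcases eq_or_lt_of_le hμCm with heq | hlt
  · exact ⟨Cm, hCmeq ▸ hFCm, hCmeq ▸ hCmD, heq⟩
  · exfalso
    -- m is a proper subset of car D
    have hmne : car Cm ≠ car D := by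
      intro h
      have : Cm = D := subC_eq h
      rw [this] at hlt
      exact absurd h2 (not_le.mpr hlt)
    obtain ⟨p, hpD, hpm⟩ := exists_of_ssubset ⟨hCmeq ▸ hCmD, fun h => hmne (le_antisymm (hCmeq ▸ hCmD) (hCmeq ▸ h))⟩
    have hδ₂ : 0 < infDist p (car Cm) :=
      ((car_isClosed Cm).notMem_iff_infDist_pos (car_nonempty Cm)).mp (by rwa [hCmeq])
    obtain ⟨δ₁, hδ₁, hcontd⟩ := Metric.continuous_iff.mp hcont Cm (s - μ Cm) (by linarith)
    set δ := min δ₁ (infDist p (car Cm)) / 2 with hδdef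
    have hδpos : 0 < δ := by positivity
    have hnc : ¬ (car D ⊆ {y | infDist y (car Cm) ≤ δ}) := by
      intro hsubs
      have := hsubs hpD
      simp only [mem_setOf_eq] at this
      have h5 : δ < infDist p (car Cm) := by
        have := min_le_right δ₁ (infDist p (car Cm))
        rw [hδdef]
        linarith [min_le_right δ₁ (infDist p (car Cm)), hδ₂]
      linarith
    obtain ⟨E, hCmE, hEsub, hEne⟩ := exists_bump (hCmeq ▸ hCmD) hδpos hnc
    have hdistE : dist E Cm < δ₁ := by
      rw [dist_eq_hd]
      have hle : hausdorffDist (car E) (car Cm) ≤ δ := by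
        apply hausdorffDist_le_of_infDist hδpos.le
        · exact fun x hx => (hEsub hx).2
        · intro y hy
          rw [infDist_zero_of_mem (hCmE hy)]
          exact hδpos.le
      have : δ < δ₁ := by
        rw [hδdef]
        have := min_le_left δ₁ (infDist p (car Cm))
        linarith [min_le_left δ₁ (infDist p (car Cm)), hδ₂, hδ₁]
      linarith
    have hμE : μ E < s := by
      have := hcontd E hdistE
      rw [Real.dist_eq] at this
      obtain ⟨h5, h6⟩ := abs_lt.mp this
      linarith
    have hES : car E ∈ S :=
      ⟨E, rfl, fun x hx => hCmE (hCmeq ▸ hFCm hx), fun x hx => (hEsub hx).1, hμE.le⟩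
    have : car E ⊆ m := hmmax.2 hES (hCmeq ▸ hCmE)
    exact hEne (le_antisymm (hCmeq ▸ hCmE) (by rwa [hCmeq]))
lemma mu_mono {μ : SubC X → ℝ}
    (hmono : ∀ A B : SubC X, car A ⊂ car B → μ A < μ B)
    {A B : SubC X} (h : car A ⊆ car B) : μ A ≤ μ B := by
  rcases eq_or_ssubset_of_subset h with heq | hss
  · rw [subC_eq heq]
  · exact (hmono A B hss).le

/-- Uniform "metric from measure" estimate for nested continua. -/
lemma lemmaU {μ : SubC X → ℝ} (hcont : Continuous μ)
    (hmono : ∀ A B : SubC X, car A ⊂ car B → μ A < μ B)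
    {η : ℝ} (hη : 0 < η) :
    ∃ δ > 0, ∀ F C : SubC X, car F ⊆ car C → μ C - μ F ≤ δ → dist F C < η := by
  classical
  set S : Set (SubC X × SubC X) := {p | car p.1 ⊆ car p.2 ∧ η ≤ dist p.1 p.2} with hSdef
  have hSclosed : IsClosed S :=
    isClosed_pairSubset.inter (isClosed_le continuous_const continuous_dist)
  have hScomp : IsCompact S := hSclosed.isCompact
  rcases S.eq_empty_or_nonempty with hSe | hSne
  · refine ⟨1, one_pos, fun F C hsub _ => ?_⟩
    by_contra hge
    have : (F, C) ∈ S := ⟨hsub, not_lt.mp hge⟩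
    rw [hSe] at this
    exact this
  · obtain ⟨p₀, hp₀S, hmin⟩ := hScomp.exists_isMinOn hSne
      (((hcont.comp continuous_snd).sub (hcont.comp continuous_fst)).continuousOn)
    have hpos : 0 < μ p₀.2 - μ p₀.1 := by
      have hss : car p₀.1 ⊂ car p₀.2 := by
        refine ⟨hp₀S.1, fun hsub => ?_⟩
        have : car p₀.1 = car p₀.2 := le_antisymm hp₀S.1 hsub
        have heq : p₀.1 = p₀.2 := subC_eq this
        have hd0 : dist p₀.1 p₀.2 = 0 := by rw [heq, dist_self]
        have h2 := hp₀S.2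
        rw [hd0] at h2
        exact absurd h2 (not_le.mpr hη)
      linarith [hmono _ _ hss]
    refine ⟨(μ p₀.2 - μ p₀.1)/2, by linarith, fun F C hsub hle => ?_⟩
    by_contra hge
    have hmem : (F, C) ∈ S := ⟨hsub, not_lt.mp hge⟩
    have hmm : μ p₀.2 - μ p₀.1 ≤ μ C - μ F := hmin hmem
    linarith

/-- Uniform continuity of `μ`. -/
lemma unif {μ : SubC X → ℝ} (hcont : Continuous μ) {ε : ℝ} (hε : 0 < ε) :
    ∃ η > 0, ∀ A B : SubC X, dist A B ≤ η → |μ A - μ B| ≤ ε := by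
  have huc : UniformContinuous μ := CompactSpace.uniformContinuous_of_continuous hcont
  obtain ⟨δ, hδ, h⟩ := Metric.uniformContinuous_iff.mp huc ε hε
  refine ⟨δ/2, half_pos hδ, fun A B hd => ?_⟩
  have := h (a := A) (b := B) (by linarith)
  rw [Real.dist_eq] at this
  exact this.le

-- new content
def Lam (μ : SubC X → ℝ) (t : ℝ) (K F : SubC X) : Set (SubC X) :=
  {C | car F ⊆ car C ∧ car C ⊆ car K ∧ μ C = t}

def Wlev (μ : SubC X → ℝ) (t : ℝ) (K : SubC X) : Set (SubC X) :=
  {C | μ C = t ∧ car C ⊆ car K}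

def st (W : Set (SubC X)) (ε : ℝ) : SubC X → SubC X → Prop :=
  fun C D => C ∈ W ∧ D ∈ W ∧ dist C D ≤ ε

def sngl (x : X) : SubC X := mk' {x} isCompact_singleton isConnected_singleton

lemma lam_subset_W {μ : SubC X → ℝ} {t : ℝ} {K F : SubC X} :
    Lam μ t K F ⊆ Wlev μ t K := fun _ hC => ⟨hC.2.2, hC.2.1⟩

lemma lam_mono {μ : SubC X → ℝ} {t : ℝ} {K F F' : SubC X} (h : car F ⊆ car F') :
    Lam μ t K F' ⊆ Lam μ t K F := fun _ hC => ⟨h.trans hC.1, hC.2⟩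

lemma rtg_mono {S S' : Set (SubC X)} (h : S ⊆ S') {ε : ℝ} {A B : SubC X}
    (hr : Relation.ReflTransGen (st S ε) A B) :
    Relation.ReflTransGen (st S' ε) A B :=
  Relation.ReflTransGen.mono (r := st S ε) (p := st S' ε) (fun _ _ hab => ⟨h hab.1, h hab.2.1, hab.2.2⟩) _ _ hr

lemma reach_in_W {μ : SubC X → ℝ} {t : ℝ} {K : SubC X} (hcont : Continuous μ)
    (h0 : ∀ (x : X) (C : SubC X), car C = {x} → μ C = 0)
    (hmono : ∀ A B : SubC X, car A ⊂ car B → μ A < μ B)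
    (ht0 : 0 ≤ t) (hKt : t ≤ μ K)
    {ε : ℝ} (hε : 0 < ε) :
    ∀ A ∈ Wlev μ t K, ∀ B ∈ Wlev μ t K,
      Relation.ReflTransGen (st (Wlev μ t K) ε) A B := by
  classical
  obtain ⟨δ₀, hδ₀, hU₀⟩ := lemmaU hcont hmono (half_pos hε)
  obtain ⟨η₁, hη₁, hunif⟩ := unif hcont (ε := δ₀/2) (by linarith)
  obtain ⟨δU, hδU, hU₁⟩ := lemmaU hcont hmono hη₁
  set δ₁ := min δU (δ₀/2) with hδ₁def
  have hδ₁pos : 0 < δ₁ := lt_min hδU (by linarith)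
  have hδ₁le : δ₁ ≤ δ₀/2 := min_le_right _ _
  have hδ₁U : δ₁ ≤ δU := min_le_left _ _
  -- base case
  have base : ∀ F : SubC X, μ F ≤ t → t - μ F ≤ δ₀ →
      ∀ C ∈ Lam μ t K F, ∀ C' ∈ Lam μ t K F,
        Relation.ReflTransGen (st (Lam μ t K F) ε) C C' := by
    intro F hμF hb C hC C' hC'
    have h1 : dist F C < ε/2 := hU₀ F C hC.1 (by rw [hC.2.2]; linarith)
    have h2 : dist F C' < ε/2 := hU₀ F C' hC'.1 (by rw [hC'.2.2]; linarith)
    have hd : dist C C' ≤ ε := by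
      calc dist C C' ≤ dist C F + dist F C' := dist_triangle _ _ _
        _ ≤ ε := by rw [dist_comm C F]; linarith
    exact Relation.ReflTransGen.single ⟨hC, hC', hd⟩
  -- main induction
  have key : ∀ k : ℕ, ∀ F : SubC X, car F ⊆ car K → μ F ≤ t →
      t - μ F ≤ δ₀ + (k : ℝ) * δ₁ →
      ∀ C ∈ Lam μ t K F, ∀ C' ∈ Lam μ t K F,
        Relation.ReflTransGen (st (Lam μ t K F) ε) C C' := by
    intro k
    induction k with
    | zero =>
      intro F _ hμF hb C hC C' hC'
      exact base F hμF (by simpa using hb) C hC C' hC'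
    | succ k ih =>
      intro F hFK hμF hb C hC C' hC'
      by_cases hbase : t - μ F ≤ δ₀
      · exact base F hμF hbase C hC C' hC'
      · push_neg at hbase
        have hcast : ((k + 1 : ℕ) : ℝ) = (k : ℝ) + 1 := by push_cast; ring
        rw [hcast] at hb
        have hμC : μ C = t := hC.2.2
        have hμC' : μ C' = t := hC'.2.2
        have hs : μ F + δ₁ ≤ t := by linarith
        obtain ⟨F₁, hFF₁, hF₁C, hμF₁⟩ :=
          exists_mu_between hcont hC.1 (le_add_of_nonneg_right hδ₁pos.le)
            (s := μ F + δ₁) (by rw [hμC]; exact hs)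
        obtain ⟨F₂, hFF₂, hF₂C', hμF₂⟩ :=
          exists_mu_between hcont hC'.1 (le_add_of_nonneg_right hδ₁pos.le)
            (s := μ F + δ₁) (by rw [hμC']; exact hs)
        have hdF₁ : dist F F₁ < η₁ := hU₁ F F₁ hFF₁ (by rw [hμF₁]; linarith)
        have hdF₂ : dist F F₂ < η₁ := hU₁ F F₂ hFF₂ (by rw [hμF₂]; linarith)
        obtain ⟨x₀, hx₀⟩ := car_nonempty F
        set Hu : SubC X := mk' (car F₁ ∪ car F₂)
          ((car_isCompact F₁).union (car_isCompact F₂))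
          ⟨⟨x₀, Or.inl (hFF₁ hx₀)⟩,
            IsPreconnected.union x₀ (hFF₁ hx₀) (hFF₂ hx₀)
              (car_isPreconnected F₁) (car_isPreconnected F₂)⟩ with hHudef
        have hHucar : car Hu = car F₁ ∪ car F₂ := rfl
        have hHK : car Hu ⊆ car K := by
          rw [hHucar]
          exact union_subset (hF₁C.trans hC.2.1) (hF₂C'.trans hC'.2.1)
        have hdH : dist Hu F ≤ η₁ := by
          rw [dist_eq_hd]
          apply hausdorffDist_le_of_infDist hη₁.le
          · intro x hx
            have hx' : x ∈ car F₁ ∪ car F₂ := hx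
            rcases hx' with hx' | hx'
            · calc infDist x (car F)
                  ≤ hausdorffDist (car F₁) (car F) :=
                    infDist_le_hausdorffDist_of_mem hx' (hed_ne_top _ _)
                _ ≤ η₁ := by
                    rw [hausdorffDist_comm, ← dist_eq_hd]
                    exact hdF₁.le
            · calc infDist x (car F)
                  ≤ hausdorffDist (car F₂) (car F) :=
                    infDist_le_hausdorffDist_of_mem hx' (hed_ne_top _ _)
                _ ≤ η₁ := by
                    rw [hausdorffDist_comm, ← dist_eq_hd]
                    exact hdF₂.le
          · intro y hy
            have : y ∈ car Hu := by
              rw [hHucar]; exact Or.inl (hFF₁ hy)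
            rw [infDist_zero_of_mem this]
            exact hη₁.le
        have hμH : μ Hu ≤ t := by
          have habs := abs_le.mp (hunif Hu F hdH)
          linarith [habs.1, habs.2]
        obtain ⟨E, hHE, hEK, hμE⟩ := exists_mu_between hcont (F := Hu) (D := K) hHK hμH hKt
        have hF₁E : car F₁ ⊆ car E := by
          refine subset_trans ?_ hHE
          rw [hHucar]; exact subset_union_left
        have hF₂E : car F₂ ⊆ car E := by
          refine subset_trans ?_ hHE
          rw [hHucar]; exact subset_union_right
        have hELam₁ : E ∈ Lam μ t K F₁ := ⟨hF₁E, hEK, hμE⟩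
        have hELam₂ : E ∈ Lam μ t K F₂ := ⟨hF₂E, hEK, hμE⟩
        have hCLam₁ : C ∈ Lam μ t K F₁ := ⟨hF₁C, hC.2.1, hμC⟩
        have hC'Lam₂ : C' ∈ Lam μ t K F₂ := ⟨hF₂C', hC'.2.1, hμC'⟩
        have hbnd₁ : t - μ F₁ ≤ δ₀ + (k : ℝ) * δ₁ := by rw [hμF₁]; linarith
        have hbnd₂ : t - μ F₂ ≤ δ₀ + (k : ℝ) * δ₁ := by rw [hμF₂]; linarith
        have r1 := ih F₁ (hF₁C.trans hC.2.1) (by rw [hμF₁]; exact hs) hbnd₁ C hCLam₁ E hELam₁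
        have r2 := ih F₂ (hF₂C'.trans hC'.2.1) (by rw [hμF₂]; exact hs) hbnd₂ E hELam₂ C' hC'Lam₂
        exact (rtg_mono (lam_mono hFF₁) r1).trans (rtg_mono (lam_mono hFF₂) r2)
  -- all elements of a pointed level are chained
  have hsnglK : ∀ x, x ∈ car K → car (sngl x) ⊆ car K := by
    intro x hx
    have : car (sngl x) = {x} := rfl
    rw [this]
    exact singleton_subset_iff.mpr hx
  have hμsngl : ∀ x : X, μ (sngl x) = 0 := fun x => h0 x (sngl x) rfl
  obtain ⟨kk, hkk⟩ := exists_nat_ge (t / δ₁)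
  have hkt : t ≤ δ₀ + (kk : ℝ) * δ₁ := by
    have : t / δ₁ * δ₁ ≤ (kk : ℝ) * δ₁ := by
      apply mul_le_mul_of_nonneg_right hkk hδ₁pos.le
    rw [div_mul_cancel₀ _ (ne_of_gt hδ₁pos)] at this
    linarith
  have pointed : ∀ x, x ∈ car K → ∀ C ∈ Lam μ t K (sngl x), ∀ C' ∈ Lam μ t K (sngl x),
      Relation.ReflTransGen (st (Lam μ t K (sngl x)) ε) C C' := by
    intro x hx C hC C' hC'
    apply key kk (sngl x) (hsnglK x hx) (by rw [hμsngl]; exact ht0)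
      (by rw [hμsngl]; simpa using hkt) C hC C' hC'
  have lam_ne : ∀ x, x ∈ car K → (Lam μ t K (sngl x)).Nonempty := by
    intro x hx
    obtain ⟨C, h1, h2, h3⟩ := exists_mu_between hcont (F := sngl x) (D := K)
      (hsnglK x hx) (by rw [hμsngl]; exact ht0) hKt
    exact ⟨C, h1, h2, h3⟩
  have mem_lam_of_W : ∀ x (C : SubC X), C ∈ Wlev μ t K → x ∈ car C →
      C ∈ Lam μ t K (sngl x) := by
    intro x C hCW hxC
    exact ⟨by rw [show car (sngl x) = {x} from rfl]; exact singleton_subset_iff.mpr hxC,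
      hCW.2, hCW.1⟩
  -- W is compact
  have hWclosed : IsClosed (Wlev μ t K) := by
    have : Wlev μ t K = {C : SubC X | μ C = t} ∩ {C : SubC X | car C ⊆ car K} := rfl
    rw [this]
    exact (isClosed_eq hcont continuous_const).inter (isClosed_carSubset (car_isClosed K))
  have hWcomp : IsCompact (Wlev μ t K) := hWclosed.isCompact
  -- the P/Q argument
  intro A hA B hB
  set W := Wlev μ t K with hWdef
  set S : Set (SubC X) := {C | C ∈ W ∧ Relation.ReflTransGen (st W ε) A C} with hSdef
  by_contra hBS
  have hBnS : B ∉ S := fun h => hBS h.2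
  set P : Set X := {x | ∃ C, C ∈ S ∧ x ∈ car C} with hPdef
  set Q : Set X := {x | ∃ C, C ∈ W ∧ C ∉ S ∧ x ∈ car C} with hQdef
  have hdisj : ∀ x, x ∈ P → x ∈ Q → False := by
    rintro x ⟨C, hCS, hxC⟩ ⟨C', hC'W, hC'nS, hxC'⟩
    have h1 : C ∈ Lam μ t K (sngl x) := mem_lam_of_W x C hCS.1 hxC
    have h2 : C' ∈ Lam μ t K (sngl x) := mem_lam_of_W x C' hC'W hxC'
    have hxK : x ∈ car K := hCS.1.2 hxC
    have hr := pointed x hxK C h1 C' h2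
    have : Relation.ReflTransGen (st W ε) C C' := rtg_mono lam_subset_W hr
    exact hC'nS ⟨hC'W, hCS.2.trans this⟩
  have hPK : P ⊆ car K := by rintro x ⟨C, hCS, hxC⟩; exact hCS.1.2 hxC
  have hQK : Q ⊆ car K := by rintro x ⟨C, hCW, _, hxC⟩; exact hCW.2 hxC
  have hcover : car K ⊆ P ∪ Q := by
    intro x hx
    obtain ⟨C, hC⟩ := lam_ne x hx
    have hCW : C ∈ W := lam_subset_W hC
    have hxC : x ∈ car C := hC.1 (by exact rfl : x ∈ car (sngl x))
    by_cases hCS : C ∈ S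
    · exact Or.inl ⟨C, hCS, hxC⟩
    · exact Or.inr ⟨C, hCW, hCS, hxC⟩
  have hPclosed : IsClosed P := by
    refine IsSeqClosed.isClosed ?_
    intro x x₀ hmem hx
    choose C hCS hxC using hmem
    obtain ⟨C₀, hC₀W, φ, hφ, htend⟩ := hWcomp.tendsto_subseq (fun n => (hCS n).1)
    have hx₀C₀ : x₀ ∈ car C₀ :=
      mem_lim htend (hx.comp hφ.tendsto_atTop) (fun n => hxC (φ n))
    obtain ⟨N, hN⟩ := Metric.tendsto_atTop.mp htend ε hε
    have hstep : st W ε (C (φ N)) C₀ :=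
      ⟨(hCS (φ N)).1, hC₀W, by have := hN N le_rfl; simpa [dist_comm] using this.le⟩
    exact ⟨C₀, ⟨hC₀W, (hCS (φ N)).2.tail hstep⟩, hx₀C₀⟩
  have hQclosed : IsClosed Q := by
    refine IsSeqClosed.isClosed ?_
    intro x x₀ hmem hx
    choose C hCW hCnS hxC using hmem
    obtain ⟨C₀, hC₀W, φ, hφ, htend⟩ := hWcomp.tendsto_subseq hCW
    have hx₀C₀ : x₀ ∈ car C₀ :=
      mem_lim htend (hx.comp hφ.tendsto_atTop) (fun n => hxC (φ n))
    obtain ⟨N, hN⟩ := Metric.tendsto_atTop.mp htend ε hε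
    refine ⟨C₀, hC₀W, ?_, hx₀C₀⟩
    intro hC₀S
    have hstep : st W ε C₀ (C (φ N)) :=
      ⟨hC₀W, hCW (φ N), by have := hN N le_rfl; simpa [dist_comm] using this.le⟩
    exact hCnS (φ N) ⟨hCW (φ N), hC₀S.2.tail hstep⟩
  -- use preconnectedness of K
  have hpc := car_isPreconnected K
  obtain ⟨a, haA⟩ := car_nonempty A
  obtain ⟨b, hbB⟩ := car_nonempty B
  have hne1 : (car K ∩ Qᶜ).Nonempty := by
    refine ⟨a, hA.2 haA, ?_⟩
    intro haQ
    exact hdisj a ⟨A, ⟨hA, Relation.ReflTransGen.refl⟩, haA⟩ haQ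
  have hne2 : (car K ∩ Pᶜ).Nonempty := by
    refine ⟨b, hB.2 hbB, ?_⟩
    intro hbP
    exact hdisj b hbP ⟨B, hB, hBnS, hbB⟩
  have hcov' : car K ⊆ Qᶜ ∪ Pᶜ := by
    intro x hx
    by_cases hxQ : x ∈ Q
    · exact Or.inr (fun hxP => hdisj x hxP hxQ)
    · exact Or.inl hxQ
  obtain ⟨z, hzK, hzQ, hzP⟩ :=
    hpc Qᶜ Pᶜ hQclosed.isOpen_compl hPclosed.isOpen_compl hcov' hne1 hne2
  rcases hcover hzK with hzP' | hzQ'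
  · exact hzP hzP'
  · exact hzQ hzQ'

end WhitAux

open WhitAux in
theorem whitney_level_in_complement_is_subcontinuum
    {X : Type*} [MetricSpace X] [CompactSpace X] [ConnectedSpace X] [Nonempty X]
    (μ : SubC X → ℝ) (hμ : IsWhitneyMap μ) (t : ℝ) (ht0 : 0 < t)
    (htX : t < μ (wholeC X))
    (H : Set X) (hH : IsOpen H)
    (K : SubC X) (hKH : (K.1 : Set X) = Hᶜ) (hKt : t < μ K) :
    (Set.Nonempty {C : SubC X | μ C = t ∧ (C.1 : Set X) ⊆ Hᶜ}) ∧
      IsCompact {C : SubC X | μ C = t ∧ (C.1 : Set X) ⊆ Hᶜ} ∧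
      IsConnected {C : SubC X | μ C = t ∧ (C.1 : Set X) ⊆ Hᶜ} := by
  obtain ⟨hcont, h0', hmono'⟩ := hμ
  have h0 : ∀ (x : X) (C : SubC X), car C = {x} → μ C = 0 := h0'
  have hmono : ∀ A B : SubC X, car A ⊂ car B → μ A < μ B := hmono'
  have hKset : car K = Hᶜ := hKH
  have hWeq : {C : SubC X | μ C = t ∧ (C.1 : Set X) ⊆ Hᶜ} = Wlev μ t K := by
    ext C
    constructor
    · rintro ⟨h1, h2⟩; exact ⟨h1, by rw [hKset]; exact h2⟩
    · rintro ⟨h1, h2⟩; exact ⟨h1, by rw [← hKset]; exact h2⟩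
  rw [hWeq]
  -- nonempty
  have hsnglK : ∀ x, x ∈ car K → car (sngl x) ⊆ car K := by
    intro x hx
    rw [show car (sngl x) = {x} from rfl]
    exact Set.singleton_subset_iff.mpr hx
  have hμsngl : ∀ x : X, μ (sngl x) = 0 := fun x => h0 x (sngl x) rfl
  have hne : (Wlev μ t K).Nonempty := by
    obtain ⟨x, hx⟩ := car_nonempty K
    obtain ⟨C, h1, h2, h3⟩ := exists_mu_between hcont (F := sngl x) (D := K)
      (hsnglK x hx) (by rw [hμsngl]; exact ht0.le) hKt.le
    exact ⟨C, h3, h2⟩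
  -- compact
  have hWclosed : IsClosed (Wlev μ t K) := by
    have : Wlev μ t K = {C : SubC X | μ C = t} ∩ {C : SubC X | car C ⊆ car K} := rfl
    rw [this]
    exact (isClosed_eq hcont continuous_const).inter (isClosed_carSubset (car_isClosed K))
  have hWcomp : IsCompact (Wlev μ t K) := hWclosed.isCompact
  refine ⟨hne, hWcomp, hne, ?_⟩
  -- connected
  by_contra hnpc
  obtain ⟨A, B, hAne, hBne, hunion, Δ, hΔ, hgap⟩ := split hWcomp hnpc
  obtain ⟨a, haA⟩ := hAne
  obtain ⟨b, hbB⟩ := hBne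
  have haW : a ∈ Wlev μ t K := by rw [hunion]; exact Or.inl haA
  have hbW : b ∈ Wlev μ t K := by rw [hunion]; exact Or.inr hbB
  have hreach := reach_in_W hcont h0 hmono ht0.le hKt.le (ε := Δ/2) (by linarith)
    a haW b hbW
  have hstay : ∀ c, Relation.ReflTransGen (st (Wlev μ t K) (Δ/2)) a c → c ∈ A := by
    intro c hc
    induction hc with
    | refl => exact haA
    | @tail p q h₁ h₂ ih =>
      have hqW := h₂.2.1
      rw [hunion] at hqW
      rcases hqW with h | h
      · exact h
      · exfalso
        have hg := hgap _ ih _ h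
        have hd := h₂.2.2
        linarith
  have hbA := hstay b hreach
  have := hgap b hbA b hbB
  simp only [dist_self] at this
  linarith
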